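/- Let K ⊂ ℂ be a set with diameter 2 containing the points -1 and 1, and suppose the width of K is w > 0 (the width is the minimum over directions γ of the projection length of K onto the direction e^{iγ}). Then K is contained in the rectangle {x + iy : -1 ≤ x ≤ 1, -w ≤ y ≤ w}. -/

import Mathlib

open Complex

lemma core_ineq (x y c s : ℝ) (hsc : c^2 + s^2 = 1) (hx0 : 0 ≤ x) (hx1 : x ≤ 1)
    (hy : 0 ≤ y) (hc : 0 ≤ c) (hyy : y^2 ≤ (1-x)*(3+x)) :
    y ≤ max (2*c) (|x*c - y*s| + c) := by
  rcases le_or_gt y (2*c) with h | h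
  · exact le_trans h (le_max_left _ _)
  rcases eq_or_lt_of_le hc with hc0 | hc0
  · -- c = 0
    have hs2 : s^2 = 1 := by nlinarith
    have habs : (|s| - 1) * (|s| + 1) = 0 := by nlinarith [_root_.sq_abs s]
    have hs1 : |s| = 1 := by
      rcases mul_eq_zero.mp habs with h' | h'
      · linarith
      · nlinarith [abs_nonneg s]
    have : |x*c - y*s| = y := by
      rw [← hc0, show x*0 - y*s = -(y*s) by ring, abs_neg, abs_mul, hs1,
        _root_.abs_of_nonneg hy]; ring
    rw [this, ← hc0]
    refine le_trans ?_ (le_max_right _ _); linarith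
  · have hy0 : 0 < y := lt_of_le_of_lt (by positivity) h
    have hss : |s|^2 = s^2 := sq_abs s
    have hs2 : (1+x)/2 < |s| := by nlinarith [abs_nonneg s]
    have h1p : (0:ℝ) < 1 + |s| := by positivity
    have h2' : y*(1-|s|)*(1+|s|) = y*c^2 := by linear_combination (-y)*hss - y*hsc
    have hx2 : x < 1 := by nlinarith
    have h3 : y*c^2 < c*(1-x)*(1+|s|) := by
      nlinarith [mul_pos (mul_pos hc0 (sub_pos.mpr hx2)) (show (0:ℝ) < 1 + |s| - (3+x)/2 by linarith),
        mul_pos hy0 (show (0:ℝ) < y - 2*c by linarith),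
        mul_pos hc0 hy0, mul_nonneg hc0.le (sub_nonneg.mpr hyy),
        mul_pos hc0 (mul_pos hy0 (show (0:ℝ) < y - 2*c by linarith))]
    have hkey : y * (1 - |s|) < c * (1 - x) :=
      lt_of_mul_lt_mul_right (by linarith) (le_of_lt h1p)
    rcases le_or_gt 0 s with hs | hs
    · have hle : y*s - x*c ≤ |x*c - y*s| := by rw [abs_sub_comm]; exact le_abs_self _
      have hsa : |s| = s := abs_of_nonneg hs
      rw [hsa] at hkey
      refine le_trans ?_ (le_max_right _ _); nlinarith
    · have hle : x*c - y*s ≤ |x*c - y*s| := le_abs_self _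
      have hsa : |s| = -s := abs_of_neg hs
      rw [hsa] at hkey
      refine le_trans ?_ (le_max_right _ _)
      nlinarith [mul_nonneg hc hx0]

lemma wrap_ineq (x y c s : ℝ) (hsc : c^2 + s^2 = 1) (hx : |x| ≤ 1)
    (hyy : y^2 ≤ (1 - |x|)*(3 + |x|)) :
    |y| ≤ max (2*|c|) (|x*c - y*s| + |c|) := by
  rcases le_or_gt 0 x with hx0 | hx0 <;> rcases le_or_gt 0 y with hy0 | hy0 <;>
      rcases le_or_gt 0 c with hc0 | hc0
  · rw [_root_.abs_of_nonneg hx0] at hx hyy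
    rw [_root_.abs_of_nonneg hy0, _root_.abs_of_nonneg hc0]
    exact core_ineq x y c s hsc hx0 hx hy0 hc0 hyy
  · rw [_root_.abs_of_nonneg hx0] at hx hyy
    rw [_root_.abs_of_nonneg hy0, abs_of_neg hc0]
    have := core_ineq x y (-c) (-s) (by linear_combination hsc) hx0 hx hy0 (by linarith) hyy
    rwa [show x*(-c) - y*(-s) = -(x*c - y*s) by ring, abs_neg] at this
  · rw [_root_.abs_of_nonneg hx0] at hx hyy
    rw [abs_of_neg hy0, _root_.abs_of_nonneg hc0]
    have := core_ineq x (-y) c (-s) (by linear_combination hsc) hx0 hx (by linarith) hc0 (by rw [neg_sq]; exact hyy)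
    rwa [show x*c - (-y)*(-s) = x*c - y*s by ring] at this
  · rw [_root_.abs_of_nonneg hx0] at hx hyy
    rw [abs_of_neg hy0, abs_of_neg hc0]
    have := core_ineq x (-y) (-c) s (by linear_combination hsc) hx0 hx (by linarith)
      (by linarith) (by rw [neg_sq]; exact hyy)
    rwa [show x*(-c) - (-y)*s = -(x*c - y*s) by ring, abs_neg] at this
  · rw [abs_of_neg hx0] at hx hyy
    rw [_root_.abs_of_nonneg hy0, _root_.abs_of_nonneg hc0]
    have := core_ineq (-x) y c (-s) (by linear_combination hsc) (by linarith) hx hy0 hc0 hyy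
    rwa [show (-x)*c - y*(-s) = -(x*c - y*s) by ring, abs_neg] at this
  · rw [abs_of_neg hx0] at hx hyy
    rw [_root_.abs_of_nonneg hy0, abs_of_neg hc0]
    have := core_ineq (-x) y (-c) s (by linear_combination hsc) (by linarith) hx hy0
      (by linarith) hyy
    rwa [show (-x)*(-c) - y*s = x*c - y*s by ring] at this
  · rw [abs_of_neg hx0] at hx hyy
    rw [abs_of_neg hy0, _root_.abs_of_nonneg hc0]
    have := core_ineq (-x) (-y) c s hsc (by linarith) hx (by linarith) hc0
      (by rw [neg_sq]; exact hyy)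
    rwa [show (-x)*c - (-y)*s = -(x*c - y*s) by ring, abs_neg] at this
  · rw [abs_of_neg hx0] at hx hyy
    rw [abs_of_neg hy0, abs_of_neg hc0]
    have := core_ineq (-x) (-y) (-c) (-s) (by linear_combination hsc) (by linarith) hx
      (by linarith) (by linarith) (by rw [neg_sq]; exact hyy)
    rwa [show (-x)*(-c) - (-y)*(-s) = x*c - y*s by ring] at this

/-- The width of a planar set: the minimum over directions `γ` of the length of the
projection of `K` onto the direction `e^{iγ}`. -/
noncomputable def setWidth (K : Set ℂ) : ℝ :=
  ⨅ γ : ℝ, (sSup ((fun z : ℂ => (z * Complex.exp (γ * Complex.I)).re) '' K) -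
    sInf ((fun z : ℂ => (z * Complex.exp (γ * Complex.I)).re) '' K))

/-- If `K ⊂ ℂ` has diameter `2`, contains `-1` and `1`, and has positive width `w`,
then `K` is contained in the rectangle `[-1,1] × [-w, w]`. -/
theorem stmt_4 (K : Set ℂ) (hdiam : Metric.diam K = 2)
    (h1 : (-1 : ℂ) ∈ K) (h2 : (1 : ℂ) ∈ K) (hw : 0 < setWidth K) :
    ∀ z ∈ K, |z.re| ≤ 1 ∧ |z.im| ≤ setWidth K := by
  intro z hz
  have hb : Bornology.IsBounded K := by
    by_contra hcon
    have := Metric.diam_eq_zero_of_unbounded hcon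
    rw [hdiam] at this; norm_num at this
  have hd1 : dist z 1 ≤ 2 := hdiam ▸ Metric.dist_le_diam_of_mem hb hz h2
  have hd2 : dist z (-1) ≤ 2 := hdiam ▸ Metric.dist_le_diam_of_mem hb hz h1
  have e1 : (z.re - 1)^2 + z.im^2 ≤ 4 := by
    rw [Complex.dist_eq] at hd1
    have h' : ‖z - 1‖ ^ 2 ≤ 4 := by nlinarith [norm_nonneg (z-1)]
    rw [Complex.sq_norm, Complex.normSq_apply, Complex.sub_re, Complex.sub_im,
      Complex.one_re, Complex.one_im] at h'
    nlinarith [h']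
  have e2 : (z.re + 1)^2 + z.im^2 ≤ 4 := by
    rw [Complex.dist_eq, sub_neg_eq_add] at hd2
    have h' : ‖z + 1‖ ^ 2 ≤ 4 := by nlinarith [norm_nonneg (z+1)]
    rw [Complex.sq_norm, Complex.normSq_apply, Complex.add_re, Complex.add_im,
      Complex.one_re, Complex.one_im] at h'
    nlinarith [h']
  have hx : |z.re| ≤ 1 := abs_le.mpr
    ⟨by nlinarith [sq_nonneg z.im, sq_nonneg (z.re + 1)],
     by nlinarith [sq_nonneg z.im, sq_nonneg (z.re - 1)]⟩
  have hyy : z.im^2 ≤ (1 - |z.re|)*(3 + |z.re|) := by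
    rcases abs_cases z.re with ⟨hh, _⟩ | ⟨hh, _⟩ <;> rw [hh] <;> nlinarith
  refine ⟨hx, ?_⟩
  rw [setWidth]
  refine le_ciInf fun γ => ?_
  set f : ℂ → ℝ := fun w => (w * Complex.exp (γ * Complex.I)).re with hf
  have hbd : ∀ w ∈ K, |f w| ≤ 3 := by
    intro w hw'
    have hwd : dist w 1 ≤ 2 := hdiam ▸ Metric.dist_le_diam_of_mem hb hw' h2
    rw [Complex.dist_eq] at hwd
    have hw3 : ‖w‖ ≤ 3 := by
      calc ‖w‖ = ‖w - 1 + 1‖ := by ring_nf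
        _ ≤ ‖w - 1‖ + ‖(1:ℂ)‖ := norm_add_le _ _
        _ ≤ 3 := by rw [norm_one]; linarith
    calc |f w| ≤ ‖w * Complex.exp (γ * Complex.I)‖ := Complex.abs_re_le_norm _
      _ = ‖w‖ * 1 := by rw [norm_mul, Complex.norm_exp_ofReal_mul_I]
      _ ≤ 3 := by linarith
  have hA : BddAbove (f '' K) := ⟨3, by rintro r ⟨w, hw', rfl⟩; exact (abs_le.mp (hbd w hw')).2⟩
  have hB : BddBelow (f '' K) := ⟨-3, by rintro r ⟨w, hw', rfl⟩; exact (abs_le.mp (hbd w hw')).1⟩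
  have key : ∀ p ∈ K, ∀ q ∈ K, f p - f q ≤ sSup (f '' K) - sInf (f '' K) := by
    intro p hp q hq
    have l1 := le_csSup hA ⟨p, hp, rfl⟩
    have l2 := csInf_le hB ⟨q, hq, rfl⟩
    linarith
  have f1 : f 1 = Real.cos γ := by simp [hf, Complex.exp_ofReal_mul_I_re]
  have fm1 : f (-1) = -Real.cos γ := by simp [hf, Complex.exp_ofReal_mul_I_re]
  have fz : f z = z.re * Real.cos γ - z.im * Real.sin γ := by
    simp [hf, Complex.mul_re, Complex.exp_ofReal_mul_I_re, Complex.exp_ofReal_mul_I_im]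
  have hw1 := wrap_ineq z.re z.im (Real.cos γ) (Real.sin γ)
    (Real.cos_sq_add_sin_sq γ) hx hyy
  refine hw1.trans (max_le ?_ ?_)
  · rcases abs_cases (Real.cos γ) with ⟨hh, _⟩ | ⟨hh, _⟩ <;> rw [hh]
    · have := key 1 h2 (-1) h1; rw [f1, fm1] at this; linarith
    · have := key (-1) h1 1 h2; rw [f1, fm1] at this; linarith
  · rcases abs_cases (z.re * Real.cos γ - z.im * Real.sin γ) with ⟨hh, _⟩ | ⟨hh, _⟩ <;>
      rcases abs_cases (Real.cos γ) with ⟨hh2, _⟩ | ⟨hh2, _⟩ <;> rw [hh, hh2]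
    · have := key z hz (-1) h1; rw [fz, fm1] at this; linarith
    · have := key z hz 1 h2; rw [fz, f1] at this; linarith
    · have := key 1 h2 z hz; rw [fz, f1] at this; linarith
    · have := key (-1) h1 z hz; rw [fz, fm1] at this; linarith
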